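/- Fix a real base b with 1 < b ≤ 2. For all natural numbers n₁ and n₂, the distribution on ℕ obtained by independently sampling X from morris(b, n₁) and Y from morris(b, n₂) and then outputting merge(X, Y) is exactly the distribution morris(b, n₁ + n₂). -/

import Mathlib

open scoped ENNReal

/-- A coin flip returning `true` with probability `min p 1`. -/
noncomputable def coin (p : ℝ≥0∞) : PMF Bool := PMF.ofFintype (fun b => cond b (min p 1) (1 - min p 1))
  (by rw [Fintype.sum_bool]; exact add_tsub_cancel_of_le (min_le_right p 1))

/-- The Morris counter distribution with base `b` after `n` increments: starting from `0`,
each increment raises a counter `c` to `c + 1` with probability `b ^ (-c)`. -/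
noncomputable def morris (b : ℝ) : ℕ → PMF ℕ
  | 0 => PMF.pure 0
  | n + 1 => (morris b n).bind fun c =>
      (coin (ENNReal.ofReal (b ^ (-(c : ℝ))))).bind fun h =>
        PMF.pure (if h then c + 1 else c)

/-- Merging two Morris counters with values `x` and `y`: set `Z₀ = x`, and for
`i = 1, …, y` set `Zᵢ = Zᵢ₋₁ + 1` with probability `min 1 (b ^ (-Zᵢ₋₁ + i - 1))`, else
`Zᵢ = Zᵢ₋₁`; output `Z_y`. -/
noncomputable def morrisMerge (b : ℝ) (x : ℕ) : ℕ → PMF ℕ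
  | 0 => PMF.pure x
  | y + 1 => (morrisMerge b x y).bind fun z =>
      (coin (ENNReal.ofReal (b ^ ((y : ℝ) - (z : ℝ))))).bind fun h =>
        PMF.pure (if h then z + 1 else z)

/-- For any base `1 < b ≤ 2`, merging independent Morris counters run on `n₁` and `n₂`
increments yields exactly the distribution of a Morris counter run on `n₁ + n₂`
increments. -/
lemma coin_apply (p : ℝ≥0∞) (b : Bool) : coin p b = cond b (min p 1) (1 - min p 1) := rfl

lemma bind_congr_support {α β : Type*} {p : PMF α} {f g : α → PMF β}
    (h : ∀ a ∈ p.support, f a = g a) : p.bind f = p.bind g := by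
  ext b
  simp only [PMF.bind_apply]
  refine tsum_congr fun a => ?_
  by_cases ha : a ∈ p.support
  · rw [h a ha]
  · rw [PMF.mem_support_iff, not_not] at ha
    simp [ha]

lemma coin_coin (p q : ℝ≥0∞) (hp : p ≤ 1) (hq : q ≤ 1) :
    ((coin p).bind fun h => if h then coin q else PMF.pure false) = coin (p * q) := by
  have hpq : p * q ≤ 1 := mul_le_one' hp hq
  have h1 : min p 1 = p := min_eq_left hp
  have h2 : min q 1 = q := min_eq_left hq
  have h3 : min (p * q) 1 = p * q := min_eq_left hpq
  ext b
  rw [PMF.bind_apply, tsum_bool]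
  cases b with
  | true =>
    simp [coin_apply, h1, h2, h3]
  | false =>
    simp only [coin_apply, h1, h2, h3, Bool.cond_false, Bool.cond_true, Bool.false_eq_true,
      if_false, PMF.pure_apply, if_true, ite_true, if_pos trivial, mul_one]
    rw [ENNReal.mul_sub (fun _ _ => (lt_of_le_of_lt hp ENNReal.one_lt_top).ne)]
    rw [mul_one]
    exact tsub_add_tsub_cancel hp (mul_le_of_le_one_right' hq)

lemma merge_support (b : ℝ) (hb : 1 < b) (x : ℕ) :
    ∀ y : ℕ, ∀ z ∈ (morrisMerge b x y).support, x ≤ z ∧ y ≤ z := by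
  intro y
  induction y with
  | zero =>
    intro z hz
    rw [morrisMerge, PMF.support_pure, Set.mem_singleton_iff] at hz
    subst hz
    exact ⟨le_refl _, Nat.zero_le _⟩
  | succ y ih =>
    intro z hz
    rw [morrisMerge, PMF.mem_support_bind_iff] at hz
    obtain ⟨w, hw, hz⟩ := hz
    rw [PMF.mem_support_bind_iff] at hz
    obtain ⟨h, hh, hz⟩ := hz
    rw [PMF.support_pure, Set.mem_singleton_iff] at hz
    subst hz
    obtain ⟨hxw, hyw⟩ := ih w hw
    cases h with
    | true => exact ⟨le_trans hxw (Nat.le_succ _), Nat.succ_le_succ hyw⟩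
    | false =>
      refine ⟨hxw, ?_⟩
      -- need y + 1 ≤ w, i.e. w ≠ y; else the coin is deterministic true
      rcases lt_or_eq_of_le hyw with hlt | heq
      · exact hlt
      · exfalso
        subst heq
        have hone : ENNReal.ofReal (b ^ ((y : ℝ) - (y : ℝ))) = 1 := by
          rw [sub_self, Real.rpow_zero, ENNReal.ofReal_one]
        rw [PMF.mem_support_iff, coin_apply, Bool.cond_false, hone] at hh
        simp at hh

lemma ofReal_rpow_le_one (b : ℝ) (hb : 1 < b) {e : ℝ} (he : e ≤ 0) :
    ENNReal.ofReal (b ^ e) ≤ 1 := by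
  rw [show (1 : ℝ≥0∞) = ENNReal.ofReal 1 by simp]
  exact ENNReal.ofReal_le_ofReal (Real.rpow_le_one_of_one_le_of_nonpos hb.le he)

lemma merge_step (b : ℝ) (hb : 1 < b) (x y : ℕ) :
    ((coin (ENNReal.ofReal (b ^ (-(y : ℝ))))).bind fun h =>
        morrisMerge b x (if h then y + 1 else y))
      = (morrisMerge b x y).bind fun z =>
        (coin (ENNReal.ofReal (b ^ (-(z : ℝ))))).bind fun h =>
          PMF.pure (if h then z + 1 else z) := by
  have hexp : ∀ h : Bool, morrisMerge b x (if h then y + 1 else y)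
      = (morrisMerge b x y).bind fun z =>
          if h then (coin (ENNReal.ofReal (b ^ ((y : ℝ) - (z : ℝ))))).bind fun h' =>
            PMF.pure (if h' then z + 1 else z)
          else PMF.pure z := by
    intro h
    cases h with
    | true => rw [if_pos rfl, morrisMerge]; simp
    | false => rw [if_neg (by simp)]; simp [PMF.bind_pure]
  simp only [hexp]
  rw [PMF.bind_comm]
  refine bind_congr_support fun z hz => ?_
  obtain ⟨hxz, hyz⟩ := merge_support b hb x y z hz
  -- now pointwise: compose the two coins
  have key : ((coin (ENNReal.ofReal (b ^ (-(y : ℝ))))).bind fun h =>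
      if h then coin (ENNReal.ofReal (b ^ ((y : ℝ) - (z : ℝ)))) else PMF.pure false)
      = coin (ENNReal.ofReal (b ^ (-(z : ℝ)))) := by
    rw [coin_coin _ _ (ofReal_rpow_le_one b hb (neg_nonpos.mpr (Nat.cast_nonneg y)))
      (ofReal_rpow_le_one b hb (by
        have : (y : ℝ) ≤ (z : ℝ) := Nat.cast_le.mpr hyz
        linarith))]
    congr 1
    rw [← ENNReal.ofReal_mul (Real.rpow_nonneg (by linarith) _),
      ← Real.rpow_add (by linarith : (0:ℝ) < b)]
    ring_nf
  calc ((coin (ENNReal.ofReal (b ^ (-(y : ℝ))))).bind fun h =>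
          if h then (coin (ENNReal.ofReal (b ^ ((y : ℝ) - (z : ℝ))))).bind fun h' =>
            PMF.pure (if h' then z + 1 else z)
          else PMF.pure z)
      = ((coin (ENNReal.ofReal (b ^ (-(y : ℝ))))).bind fun h =>
          if h then coin (ENNReal.ofReal (b ^ ((y : ℝ) - (z : ℝ)))) else PMF.pure false).bind
            fun h' => PMF.pure (if h' then z + 1 else z) := by
        rw [PMF.bind_bind]
        refine bind_congr_support fun h _ => ?_
        cases h <;> simp
    _ = (coin (ENNReal.ofReal (b ^ (-(z : ℝ))))).bind fun h' =>
          PMF.pure (if h' then z + 1 else z) := by rw [key]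

theorem stmt_10 (b : ℝ) (hb1 : 1 < b) (hb2 : b ≤ 2) (n₁ n₂ : ℕ) :
    ((morris b n₁).bind fun x => (morris b n₂).bind fun y => morrisMerge b x y)
      = morris b (n₁ + n₂) := by
  induction n₂ with
  | zero =>
    simp [morris, morrisMerge, PMF.pure_bind, PMF.bind_pure]
  | succ n₂ ih =>
    rw [show n₁ + (n₂ + 1) = (n₁ + n₂) + 1 from rfl]
    calc ((morris b n₁).bind fun x => (morris b (n₂ + 1)).bind fun y => morrisMerge b x y)
        = (morris b n₁).bind fun x => (morris b n₂).bind fun c =>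
            (coin (ENNReal.ofReal (b ^ (-(c : ℝ))))).bind fun h =>
              morrisMerge b x (if h then c + 1 else c) := by
          simp only [morris, PMF.bind_bind, PMF.pure_bind]
      _ = (morris b n₁).bind fun x => (morris b n₂).bind fun c =>
            (morrisMerge b x c).bind fun z =>
              (coin (ENNReal.ofReal (b ^ (-(z : ℝ))))).bind fun h =>
                PMF.pure (if h then z + 1 else z) := by
          simp only [merge_step b hb1]
      _ = ((morris b n₁).bind fun x => (morris b n₂).bind fun c => morrisMerge b x c).bind
            fun z => (coin (ENNReal.ofReal (b ^ (-(z : ℝ))))).bind fun h =>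
              PMF.pure (if h then z + 1 else z) := by
          simp only [PMF.bind_bind]
      _ = morris b ((n₁ + n₂) + 1) := by rw [ih, morris]
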